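/- For a connected edge-weighted graph (G,ω) with finitely many spanning trees, there exists a single spanning tree T that simultaneously minimizes the L^p spanning tree congestion for all sufficiently large integers p and for p = ∞. -/

import Mathlib

open Classical

noncomputable section CongestionDefs

variable {V : Type*} [Fintype V] [DecidableEq V]

/-- Weighted congestion of an edge `e` of a spanning tree `T` of `G`: total weight of
edges of `G` whose endpoints are separated in `T` with `e` removed. -/
def edgeCongestion (G T : SimpleGraph V) (ω : Sym2 V → ℝ) (e : Sym2 V) : ℝ :=
  ∑ f : Sym2 V,
    if f ∈ G.edgeSet ∧ ∃ a b : V, f = s(a, b) ∧ ¬ (T.deleteEdges {e}).Reachable a b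
    then ω f else 0

/-- The `L^p` congestion of a spanning tree `T` (for a natural `p ≥ 1`). -/
def treeCong (G T : SimpleGraph V) (ω : Sym2 V → ℝ) (p : ℕ) : ℝ :=
  (∑ e : Sym2 V, if e ∈ T.edgeSet then (edgeCongestion G T ω e) ^ p else 0) ^ ((1 : ℝ) / p)

/-- The `L^∞` congestion of a spanning tree `T`. -/
def treeCongTop (G T : SimpleGraph V) (ω : Sym2 V → ℝ) : ℝ :=
  ⨆ e ∈ T.edgeSet, edgeCongestion G T ω e

/-- `T` is a spanning tree of `G`. -/
def IsSpanningTree (G T : SimpleGraph V) : Prop := T ≤ G ∧ T.IsTree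

/-- The `L^p` spanning tree congestion of `(G, ω)`. -/
def graphCong (G : SimpleGraph V) (ω : Sym2 V → ℝ) (p : ℕ) : ℝ :=
  sInf {x | ∃ T : SimpleGraph V, IsSpanningTree G T ∧ treeCong G T ω p = x}

/-- The `L^∞` spanning tree congestion of `(G, ω)`. -/
def graphCongTop (G : SimpleGraph V) (ω : Sym2 V → ℝ) : ℝ :=
  sInf {x | ∃ T : SimpleGraph V, IsSpanningTree G T ∧ treeCongTop G T ω = x}

/-- Total weight of (the edges of) a graph. -/
def totalWeight (T : SimpleGraph V) (ρ : Sym2 V → ℝ) : ℝ :=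
  ∑ e : Sym2 V, if e ∈ T.edgeSet then ρ e else 0

end CongestionDefs

section Auxiliary

open Filter

/-- Minimum of a total transitive relation on a nonempty finset. -/
lemma finset_exists_min_rel {α : Type*} [DecidableEq α] (r : α → α → Prop)
    (htot : ∀ a b, r a b ∨ r b a) (htrans : ∀ {a b c}, r a b → r b c → r a c)
    (s : Finset α) (hs : s.Nonempty) : ∃ a ∈ s, ∀ b ∈ s, r a b := by
  induction s using Finset.induction_on with
  | empty => exact absurd hs (by simp)
  | @insert a s ha ih =>
    rcases s.eq_empty_or_nonempty with rfl | hs'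
    · exact ⟨a, by simp, fun b hb => by
        simp only [Finset.mem_insert, Finset.notMem_empty, or_false] at hb
        subst hb; exact (htot _ _).elim id id⟩
    · obtain ⟨m, hm, hmin⟩ := ih hs'
      rcases htot a m with h | h
      · refine ⟨a, Finset.mem_insert_self _ _, fun b hb => ?_⟩
        rcases Finset.mem_insert.1 hb with rfl | hb
        · exact (htot _ _).elim id id
        · exact htrans h (hmin b hb)
      · refine ⟨m, Finset.mem_insert_of_mem hm, fun b hb => ?_⟩
        rcases Finset.mem_insert.1 hb with rfl | hb
        · exact h
        · exact hmin b hb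

lemma le_of_eventually_pow_le {a d K : ℝ} (hd : 0 ≤ d)
    (h : ∀ᶠ p : ℕ in atTop, a ^ p ≤ K * d ^ p) : a ≤ d := by
  by_contra hlt
  push_neg at hlt
  have ha0 : 0 < a := lt_of_le_of_lt hd hlt
  have h1 : Tendsto (fun p : ℕ => K * (d / a) ^ p) atTop (nhds (K * 0)) :=
    tendsto_const_nhds.mul (tendsto_pow_atTop_nhds_zero_of_lt_one (div_nonneg hd ha0.le)
      ((div_lt_one ha0).2 hlt))
  rw [mul_zero] at h1
  obtain ⟨p, hp1, hp2⟩ := (h.and (h1.eventually_lt_const one_pos)).exists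
  have hap : 0 < a ^ p := pow_pos ha0 p
  have : K * d ^ p < a ^ p := by
    have := mul_lt_mul_of_pos_right hp2 hap
    rwa [one_mul, mul_assoc, div_pow, div_mul_cancel₀ _ hap.ne'] at this
  exact absurd hp1 (not_le.2 this)

/-- Regrouping a sum of `p`-th powers by values. -/
lemma sum_pow_regroup {ι : Type*} [DecidableEq ι] (s : Finset ι) (a : ι → ℝ) (p : ℕ) :
    ∑ i ∈ s, a i ^ p
      = ∑ x ∈ s.image a, ((s.filter fun i => a i = x).card : ℝ) * x ^ p := by
  classical
  rw [← Finset.sum_fiberwise_of_maps_to (fun i hi => Finset.mem_image_of_mem a hi)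
    (fun i => a i ^ p)]
  refine Finset.sum_congr rfl fun x hx => ?_
  rw [Finset.sum_congr rfl (fun i hi => ?_), Finset.sum_const, nsmul_eq_mul]
  rw [(Finset.mem_filter.1 hi).2]

/-- Eventual dichotomy for sums of `p`-th powers of positive reals. -/
lemma sum_pow_dichotomy {ι : Type*} (s t : Finset ι) (a b : ι → ℝ)
    (ha : ∀ i ∈ s, 0 < a i) (hb : ∀ i ∈ t, 0 < b i) :
    (∀ᶠ p : ℕ in atTop, ∑ i ∈ s, a i ^ p ≤ ∑ i ∈ t, b i ^ p) ∨
    (∀ᶠ p : ℕ in atTop, ∑ i ∈ t, b i ^ p ≤ ∑ i ∈ s, a i ^ p) := by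
  classical
  set F : Finset ℝ := s.image a ∪ t.image b with hF
  set ca : ℝ → ℕ := fun x => (s.filter fun i => a i = x).card with hca
  set cb : ℝ → ℕ := fun x => (t.filter fun i => b i = x).card with hcb
  set n : ℝ → ℝ := fun x => (cb x : ℝ) - (ca x : ℝ) with hn
  have hFpos : ∀ x ∈ F, 0 < x := by
    intro x hx
    rcases Finset.mem_union.1 hx with hx | hx
    · obtain ⟨i, hi, rfl⟩ := Finset.mem_image.1 hx; exact ha i hi
    · obtain ⟨i, hi, rfl⟩ := Finset.mem_image.1 hx; exact hb i hi
  have hsum_a : ∀ p : ℕ, ∑ i ∈ s, a i ^ p = ∑ x ∈ F, (ca x : ℝ) * x ^ p := by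
    intro p
    rw [sum_pow_regroup s a p]
    refine Finset.sum_subset Finset.subset_union_left (fun x hx hx' => ?_)
    have : (s.filter fun i => a i = x) = ∅ := by
      rw [Finset.filter_eq_empty_iff]
      intro i hi hix
      exact hx' (hix ▸ Finset.mem_image_of_mem a hi)
    simp [hca, this]
  have hsum_b : ∀ p : ℕ, ∑ i ∈ t, b i ^ p = ∑ x ∈ F, (cb x : ℝ) * x ^ p := by
    intro p
    rw [sum_pow_regroup t b p]
    refine Finset.sum_subset Finset.subset_union_right (fun x hx hx' => ?_)
    have : (t.filter fun i => b i = x) = ∅ := by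
      rw [Finset.filter_eq_empty_iff]
      intro i hi hix
      exact hx' (hix ▸ Finset.mem_image_of_mem b hi)
    simp [hcb, this]
  set P : Finset ℝ := F.filter fun x => n x ≠ 0 with hP
  have key : ∀ p : ℕ, ∑ i ∈ t, b i ^ p - ∑ i ∈ s, a i ^ p = ∑ x ∈ P, n x * x ^ p := by
    intro p
    rw [hsum_a, hsum_b, ← Finset.sum_sub_distrib]
    rw [← Finset.sum_filter_of_ne (p := fun x => n x ≠ 0)
      (fun x hx hne => by
        intro h0
        apply hne
        have h0' : (cb x : ℝ) - (ca x : ℝ) = 0 := h0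
        have hcc : (cb x : ℝ) = (ca x : ℝ) := by linarith
        rw [hcc]; ring)]
    refine Finset.sum_congr rfl fun x hx => ?_
    rw [hn]; ring
  rcases P.eq_empty_or_nonempty with hPe | hPne
  · left
    refine Eventually.of_forall fun p => ?_
    have := key p
    rw [hPe, Finset.sum_empty, sub_eq_zero] at this
    exact this.ge
  · set M : ℝ := P.max' hPne with hM
    have hMP : M ∈ P := P.max'_mem hPne
    have hM0 : 0 < M := hFpos M (Finset.mem_filter.1 hMP).1
    set Q : Finset ℝ := P.erase M with hQ
    set m : ℝ := if hQn : Q.Nonempty then Q.max' hQn else M / 2 with hm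
    have hQF : ∀ x ∈ Q, x ∈ F := fun x hx =>
      (Finset.mem_filter.1 (Finset.mem_of_mem_erase hx)).1
    have hm0 : 0 ≤ m := by
      rw [hm]
      split
      · next hQn => exact (hFpos _ (hQF _ (Q.max'_mem hQn))).le
      · positivity
    have hmM : m < M := by
      rw [hm]
      split
      · next hQn =>
        have h1 : Q.max' hQn ∈ Q := Q.max'_mem hQn
        have h2 : Q.max' hQn ≤ M := P.le_max' _ (Finset.mem_of_mem_erase h1)
        exact lt_of_le_of_ne h2 (Finset.ne_of_mem_erase h1)
      · exact half_lt_self hM0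
    have hxm : ∀ x ∈ Q, x ≤ m := by
      intro x hx
      rw [hm]
      split
      · next hQn => exact Q.le_max' x hx
      · next hQn => exact absurd ⟨x, hx⟩ hQn
    set C : ℝ := ∑ x ∈ Q, |n x| with hC
    have hR : ∀ p : ℕ, |∑ x ∈ Q, n x * x ^ p| ≤ C * m ^ p := by
      intro p
      refine (Finset.abs_sum_le_sum_abs _ _).trans ?_
      rw [hC, Finset.sum_mul]
      refine Finset.sum_le_sum fun x hx => ?_
      rw [abs_mul, abs_pow, abs_of_pos (hFpos x (hQF x hx))]
      exact mul_le_mul_of_nonneg_left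
        (pow_le_pow_left₀ (hFpos x (hQF x hx)).le (hxm x hx) p) (abs_nonneg _)
    have hnM : n M ≠ 0 := (Finset.mem_filter.1 hMP).2
    have hnMeq : n M = (cb M : ℝ) - (ca M : ℝ) := rfl
    have hnM1 : (1 : ℝ) ≤ |n M| := by
      have hne2 : cb M ≠ ca M := by
        intro h
        apply hnM
        rw [hnMeq, h]; ring
      rcases lt_or_gt_of_ne hne2 with h | h
      · have h' : (cb M : ℝ) + 1 ≤ (ca M : ℝ) := by exact_mod_cast h
        calc (1 : ℝ) ≤ (ca M : ℝ) - (cb M : ℝ) := by linarith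
          _ = |(ca M : ℝ) - (cb M : ℝ)| := (abs_of_nonneg (by linarith)).symm
          _ = |n M| := by rw [hnMeq, abs_sub_comm]
      · have h' : (ca M : ℝ) + 1 ≤ (cb M : ℝ) := by exact_mod_cast h
        calc (1 : ℝ) ≤ (cb M : ℝ) - (ca M : ℝ) := by linarith
          _ = |(cb M : ℝ) - (ca M : ℝ)| := (abs_of_nonneg (by linarith)).symm
          _ = |n M| := by rw [hnMeq]
    have hev : ∀ᶠ p : ℕ in atTop, C * m ^ p < M ^ p := by
      have h1 : Tendsto (fun p : ℕ => C * (m / M) ^ p) atTop (nhds (C * 0)) :=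
        tendsto_const_nhds.mul (tendsto_pow_atTop_nhds_zero_of_lt_one
          (div_nonneg hm0 hM0.le) ((div_lt_one hM0).2 hmM))
      rw [mul_zero] at h1
      filter_upwards [h1.eventually_lt_const one_pos] with p hp
      have hMp : 0 < M ^ p := pow_pos hM0 p
      have := mul_lt_mul_of_pos_right hp hMp
      rwa [one_mul, mul_assoc, div_pow, div_mul_cancel₀ _ hMp.ne'] at this
    have hsplit : ∀ p : ℕ, ∑ x ∈ P, n x * x ^ p = n M * M ^ p + ∑ x ∈ Q, n x * x ^ p :=
      fun p => (Finset.add_sum_erase P (fun x => n x * x ^ p) hMP).symm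
    rcases hnM.lt_or_gt with hneg | hpos
    · right
      filter_upwards [hev] with p hp
      have h1 : n M ≤ -1 := by
        have := abs_of_neg hneg
        linarith [hnM1, this]
      have hMp : (0:ℝ) < M ^ p := pow_pos hM0 p
      have h2 : n M * M ^ p ≤ -M ^ p := by nlinarith
      have h3 := key p
      have h4 := (abs_le.1 (hR p)).2
      rw [hsplit p] at h3
      nlinarith
    · left
      filter_upwards [hev] with p hp
      have h1 : 1 ≤ n M := by
        have := abs_of_pos hpos
        linarith [hnM1]
      have hMp : (0:ℝ) < M ^ p := pow_pos hM0 p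
      have h2 : M ^ p ≤ n M * M ^ p := by nlinarith
      have h3 := key p
      have h4 := (abs_le.1 (hR p)).1
      rw [hsplit p] at h3
      nlinarith

/-- Eventual dichotomy for sums of `p`-th powers of nonnegative reals. -/
lemma sum_pow_dichotomy_nonneg {ι : Type*} (s t : Finset ι) (a b : ι → ℝ)
    (ha : ∀ i ∈ s, 0 ≤ a i) (hb : ∀ i ∈ t, 0 ≤ b i) :
    (∀ᶠ p : ℕ in atTop, ∑ i ∈ s, a i ^ p ≤ ∑ i ∈ t, b i ^ p) ∨
    (∀ᶠ p : ℕ in atTop, ∑ i ∈ t, b i ^ p ≤ ∑ i ∈ s, a i ^ p) := by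
  classical
  have hs : ∀ p : ℕ, 1 ≤ p →
      ∑ i ∈ s.filter (fun i => 0 < a i), a i ^ p = ∑ i ∈ s, a i ^ p := by
    intro p hp
    refine Finset.sum_filter_of_ne fun i hi hne => ?_
    rcases (ha i hi).lt_or_eq with h | h
    · exact h
    · exact absurd (by rw [← h, zero_pow (by omega)]) hne
  have ht : ∀ p : ℕ, 1 ≤ p →
      ∑ i ∈ t.filter (fun i => 0 < b i), b i ^ p = ∑ i ∈ t, b i ^ p := by
    intro p hp
    refine Finset.sum_filter_of_ne fun i hi hne => ?_
    rcases (hb i hi).lt_or_eq with h | h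
    · exact h
    · exact absurd (by rw [← h, zero_pow (by omega)]) hne
  rcases sum_pow_dichotomy (s.filter fun i => 0 < a i) (t.filter fun i => 0 < b i) a b
      (fun i hi => (Finset.mem_filter.1 hi).2) (fun i hi => (Finset.mem_filter.1 hi).2)
    with h | h
  · left
    filter_upwards [h, eventually_ge_atTop 1] with p h1 h2
    rw [← hs p h2, ← ht p h2]; exact h1
  · right
    filter_upwards [h, eventually_ge_atTop 1] with p h1 h2
    rw [← hs p h2, ← ht p h2]; exact h1

open SimpleGraph in
lemma connected_deleteEdge_of_reachable {V : Type*} {G : SimpleGraph V} (hG : G.Connected)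
    {v w : V} (hre : (G \ SimpleGraph.fromEdgeSet {s(v, w)}).Reachable v w) :
    (G.deleteEdges {s(v, w)}).Connected := by
  have hkey : ∀ {x y : V} (_ : G.Walk x y), (G.deleteEdges {s(v, w)}).Reachable x y := by
    intro x y p
    induction p with
    | nil => exact Reachable.refl _
    | @cons x' b y' h q ih =>
      refine Reachable.trans ?_ ih
      by_cases he : s(x', b) = s(v, w)
      · rw [Sym2.eq_iff] at he
        rcases he with ⟨rfl, rfl⟩ | ⟨rfl, rfl⟩
        · exact hre
        · exact hre.symm
      · refine SimpleGraph.Adj.reachable ?_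
        rw [SimpleGraph.deleteEdges_adj]
        exact ⟨h, by simpa using he⟩
  haveI : Nonempty V := hG.nonempty
  refine SimpleGraph.Connected.mk fun x y => ?_
  obtain ⟨p⟩ := hG.preconnected x y
  exact hkey p

open SimpleGraph in
lemma exists_spanning_tree_aux {V : Type*} [Fintype V] : ∀ (n : ℕ) (G : SimpleGraph V),
    G.edgeSet.ncard ≤ n → G.Connected → ∃ T, T ≤ G ∧ T.IsTree := by
  intro n
  induction n with
  | zero =>
    intro G hcard hG
    refine ⟨G, le_refl _, hG, ?_⟩
    intro v c hc
    obtain ⟨e, he⟩ : ∃ e, e ∈ c.edges := by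
      cases c with
      | nil => exact absurd rfl hc.ne_nil
      | cons h q => exact ⟨_, List.mem_cons_self⟩
    have heG : e ∈ G.edgeSet := c.edges_subset_edgeSet he
    have hemp : G.edgeSet = ∅ := by
      have hfin : G.edgeSet.Finite := Set.toFinite _
      rw [← Set.ncard_eq_zero hfin]
      omega
    simp [hemp] at heG
  | succ n ih =>
    intro G hcard hG
    by_cases hac : G.IsAcyclic
    · exact ⟨G, le_refl _, hG, hac⟩
    · simp only [SimpleGraph.IsAcyclic] at hac
      push_neg at hac
      obtain ⟨v, c, hc⟩ := hac
      obtain ⟨x, b, he⟩ : ∃ x b, G.Adj x b ∧ s(x, b) ∈ c.edges := by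
        cases c with
        | nil => exact absurd rfl hc.ne_nil
        | cons h q => exact ⟨_, _, h, List.mem_cons_self⟩
      have hre := (SimpleGraph.adj_and_reachable_delete_edges_iff_exists_cycle.2
        ⟨v, c, hc, he.2⟩).2
      have hconn' : (G.deleteEdges {s(x, b)}).Connected :=
        connected_deleteEdge_of_reachable hG hre
      have hlt : (G.deleteEdges {s(x, b)}).edgeSet.ncard < G.edgeSet.ncard := by
        rw [SimpleGraph.edgeSet_deleteEdges]
        refine Set.ncard_lt_ncard ?_ (Set.toFinite _)
        constructor
        · exact Set.diff_subset
        · intro hsub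
          have : s(x, b) ∈ G.edgeSet \ {s(x, b)} := hsub he.1
          simp at this
      obtain ⟨T, hT1, hT2⟩ := ih (G.deleteEdges {s(x, b)}) (by omega) hconn'
      exact ⟨T, le_trans hT1 (SimpleGraph.deleteEdges_le _), hT2⟩

lemma exists_spanning_tree {V : Type*} [Fintype V] (G : SimpleGraph V) (hG : G.Connected) :
    ∃ T, T ≤ G ∧ T.IsTree :=
  exists_spanning_tree_aux G.edgeSet.ncard G le_rfl hG

end Auxiliary

open Filter

/-- There is a single spanning tree minimizing the `L^p` spanning tree congestion for all
sufficiently large integers `p` and also for `p = ∞`. -/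
theorem exists_spanningTree_min_large_p {V : Type*} [Fintype V] [DecidableEq V]
    (G : SimpleGraph V) (hG : G.Connected) (ω : Sym2 V → ℝ)
    (hω : ∀ e ∈ G.edgeSet, 0 < ω e) :
    ∃ T : SimpleGraph V, IsSpanningTree G T ∧
      (∃ N : ℕ, ∀ p : ℕ, N ≤ p → ∀ T' : SimpleGraph V, IsSpanningTree G T' →
        treeCong G T ω p ≤ treeCong G T' ω p) ∧
      (∀ T' : SimpleGraph V, IsSpanningTree G T' →
        treeCongTop G T ω ≤ treeCongTop G T' ω) := by
  classical
  haveI : Nonempty V := hG.nonempty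
  haveI : Nonempty (Sym2 V) := ⟨s(Classical.arbitrary V, Classical.arbitrary V)⟩
  haveI hfinG : Finite (SimpleGraph V) :=
    Finite.of_injective (fun H => H.Adj) fun H H' h => SimpleGraph.ext h
  -- congestions are nonnegative
  have hc_nonneg : ∀ (T : SimpleGraph V) (e : Sym2 V), 0 ≤ edgeCongestion G T ω e := by
    intro T e
    refine Finset.sum_nonneg fun f _ => ?_
    split
    · next h => exact (hω f h.1).le
    · exact le_refl 0
  -- the p-th power sums
  set S : SimpleGraph V → ℕ → ℝ := fun T p =>
    ∑ e : Sym2 V, if e ∈ T.edgeSet then (edgeCongestion G T ω e) ^ p else 0 with hS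
  have hSfilter : ∀ (T : SimpleGraph V) (p : ℕ),
      S T p = ∑ e ∈ Finset.univ.filter (fun e => e ∈ T.edgeSet),
        (edgeCongestion G T ω e) ^ p := by
    intro T p
    rw [hS, Finset.sum_filter]
  have hS_nonneg : ∀ (T : SimpleGraph V) (p : ℕ), 0 ≤ S T p := by
    intro T p
    refine Finset.sum_nonneg fun e _ => ?_
    split
    · exact pow_nonneg (hc_nonneg T e) p
    · exact le_refl 0
  -- the finite nonempty type of spanning trees
  obtain ⟨T₀, hT₀le, hT₀tree⟩ := exists_spanning_tree G hG
  haveI : Nonempty {T : SimpleGraph V // IsSpanningTree G T} := ⟨⟨T₀, hT₀le, hT₀tree⟩⟩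
  haveI : Finite {T : SimpleGraph V // IsSpanningTree G T} := Subtype.finite
  haveI : Fintype {T : SimpleGraph V // IsSpanningTree G T} := Fintype.ofFinite _
  set r : {T : SimpleGraph V // IsSpanningTree G T} →
      {T : SimpleGraph V // IsSpanningTree G T} → Prop :=
    fun A B => ∀ᶠ p : ℕ in atTop, S A.1 p ≤ S B.1 p with hr
  have htot : ∀ A B, r A B ∨ r B A := by
    intro A B
    rcases sum_pow_dichotomy_nonneg (Finset.univ.filter (fun e => e ∈ A.1.edgeSet))
        (Finset.univ.filter (fun e => e ∈ B.1.edgeSet))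
        (edgeCongestion G A.1 ω) (edgeCongestion G B.1 ω)
        (fun e _ => hc_nonneg A.1 e) (fun e _ => hc_nonneg B.1 e) with h | h
    · left
      rw [hr]
      filter_upwards [h] with p hp
      rw [hSfilter A.1 p, hSfilter B.1 p]
      exact hp
    · right
      rw [hr]
      filter_upwards [h] with p hp
      rw [hSfilter A.1 p, hSfilter B.1 p]
      exact hp
  have htrans : ∀ {A B C}, r A B → r B C → r A C := by
    intro A B C h1 h2
    filter_upwards [h1, h2] with p hp1 hp2
    exact le_trans hp1 hp2
  obtain ⟨Tm, -, hTm'⟩ := finset_exists_min_rel r htot htrans Finset.univ Finset.univ_nonempty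
  have hTm : ∀ B, r Tm B := fun B => hTm' B (Finset.mem_univ B)
  -- Part 1 : L^p minimality for large p
  have hall : ∀ᶠ p : ℕ in atTop,
      ∀ B : {T : SimpleGraph V // IsSpanningTree G T}, S Tm.1 p ≤ S B.1 p :=
    eventually_all.2 fun B => hTm B
  obtain ⟨N, hN⟩ := eventually_atTop.1 hall
  refine ⟨Tm.1, Tm.2, ⟨N, fun p hp T' hT' => ?_⟩, fun T' hT' => ?_⟩
  · -- L^p case
    have h1 : S Tm.1 p ≤ S T' p := hN p hp ⟨T', hT'⟩
    have h0 : 0 ≤ S Tm.1 p := hS_nonneg Tm.1 p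
    have : (S Tm.1 p) ^ ((1:ℝ)/p) ≤ (S T' p) ^ ((1:ℝ)/p) :=
      Real.rpow_le_rpow h0 h1 (by positivity)
    exact this
  · -- L^∞ case
    have hrT' : ∀ᶠ p : ℕ in atTop, S Tm.1 p ≤ S T' p := hTm ⟨T', hT'⟩
    set d := treeCongTop G T' ω with hd
    set g : Sym2 V → ℝ := fun e => ⨆ _ : e ∈ T'.edgeSet, edgeCongestion G T' ω e with hg
    have hgite : ∀ e : Sym2 V,
        g e = if e ∈ T'.edgeSet then edgeCongestion G T' ω e else 0 := by
      intro e
      rw [hg]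
      split
      · next h =>
        haveI : Nonempty (e ∈ T'.edgeSet) := ⟨h⟩
        exact ciSup_const
      · next h =>
        haveI : IsEmpty (e ∈ T'.edgeSet) := ⟨fun h' => h h'⟩
        exact Real.iSup_of_isEmpty _
    have hdg : d = ⨆ e : Sym2 V, g e := rfl
    have hgd : ∀ e, g e ≤ d := by
      intro e
      rw [hdg]
      exact le_ciSup (Set.Finite.bddAbove (Set.finite_range g)) e
    have hd0 : 0 ≤ d := by
      obtain e0 := Classical.arbitrary (Sym2 V)
      refine le_trans ?_ (hgd e0)
      rw [hgite]
      split
      · next h => exact hc_nonneg T' e0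
      · exact le_refl 0
    have hcd : ∀ f ∈ T'.edgeSet, edgeCongestion G T' ω f ≤ d := by
      intro f hf
      have := hgd f
      rwa [hgite, if_pos hf] at this
    set K : ℝ := (Fintype.card (Sym2 V) : ℝ) with hK
    have hS'le : ∀ p : ℕ, S T' p ≤ K * d ^ p := by
      intro p
      have : S T' p ≤ ∑ _e : Sym2 V, d ^ p := by
        refine Finset.sum_le_sum fun e _ => ?_
        split
        · next h => exact pow_le_pow_left₀ (hc_nonneg T' e) (hcd e h) p
        · exact pow_nonneg hd0 p
      rwa [Finset.sum_const, Finset.card_univ, nsmul_eq_mul] at this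
    have hedge : ∀ e ∈ Tm.1.edgeSet, edgeCongestion G Tm.1 ω e ≤ d := by
      intro e he
      refine le_of_eventually_pow_le (K := K) hd0 ?_
      filter_upwards [hrT'] with p hp
      have h1 : (edgeCongestion G Tm.1 ω e) ^ p ≤ S Tm.1 p := by
        have := Finset.single_le_sum
          (f := fun f => if f ∈ Tm.1.edgeSet then (edgeCongestion G Tm.1 ω f) ^ p else 0)
          (fun f _ => by
            split
            · exact pow_nonneg (hc_nonneg Tm.1 f) p
            · exact le_refl 0)
          (Finset.mem_univ e)
        rw [if_pos he] at this
        exact this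
      exact le_trans h1 (le_trans hp (hS'le p))
    refine Real.iSup_le (fun e => Real.iSup_le (fun he => hedge e he) hd0) hd0
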